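/- (Symmetries of the dual operator X.) Define X = Σ_{i ∈ Fin N} ρ_i · ρ̄^{-1/2} · ρ_i · ρ̄^{-1/2}. Then X commutes with V(π) for every permutation π of Fin N and with T(U) for every unitary d × d matrix U: V(π) · X = X · V(π) and T(U) · X = X · T(U). -/

import Mathlib

open Matrix
open scoped ComplexOrder

/-- The state `ρ_i = Φ⁺_{A_i B} ⊗ π_{A_i^c}`: the maximally entangled state between port
`A_i` and the target system `B`, tensored with the maximally mixed state on the remaining
ports. Entries: `ρ_i[((a,b),(a',b'))] = d^(-N) ⬝ [a i = b] ⬝ [a' i = b'] ⬝ ∏_{j ≠ i} [a j = a' j]`. -/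
noncomputable def pbtRho (d N : ℕ) (i : Fin N) :
    Matrix ((Fin N → Fin d) × Fin d) ((Fin N → Fin d) × Fin d) ℂ :=
  fun x y => ((d : ℂ) ^ N)⁻¹ *
    ((if x.1 i = x.2 then 1 else 0) * (if y.1 i = y.2 then 1 else 0) *
      ∏ j ∈ Finset.univ.erase i, if x.1 j = y.1 j then (1 : ℂ) else 0)

/-- `T(U) = U^{⊗N} ⊗ Ū`, acting on the ports `A_1 … A_N` and the target system `B`. -/
noncomputable def pbtT (d N : ℕ) (U : Matrix (Fin d) (Fin d) ℂ) :
    Matrix ((Fin N → Fin d) × Fin d) ((Fin N → Fin d) × Fin d) ℂ :=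
  fun x y => (∏ j, U (x.1 j) (y.1 j)) * (starRingEnd ℂ) (U x.2 y.2)

/-- `V(π)`: the unitary permuting the `N` port tensor factors according to `π`, acting
trivially on the target system `B`. -/
noncomputable def pbtV (d N : ℕ) (π : Equiv.Perm (Fin N)) :
    Matrix ((Fin N → Fin d) × Fin d) ((Fin N → Fin d) × Fin d) ℂ :=
  fun x y => (if ∀ j, x.1 (π j) = y.1 j then (1 : ℂ) else 0) *
    (if x.2 = y.2 then 1 else 0)

/-- The pseudo-inverse square root of a matrix, obtained by functional calculus with the
function mapping `x ↦ x^(-1/2)` for `x > 0` and `0 ↦ 0`. -/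
noncomputable def pinvSqrt {m : Type*} [Fintype m] [DecidableEq m]
    (S : Matrix m m ℂ) : Matrix m m ℂ :=
  cfc (fun x : ℝ => if 0 < x then (Real.sqrt x)⁻¹ else 0) S


private lemma commute_aeval {R A : Type*} [CommSemiring R] [Semiring A] [Algebra R A]
    {a b : A} (h : Commute a b) (q : Polynomial R) : Commute (Polynomial.aeval a q) b := by
  induction q using Polynomial.induction_on with
  | C r => simpa using Algebra.commute_algebraMap_left r b
  | add p q hp hq => simpa [map_add] using hp.add_left hq
  | monomial n r _ =>
      simp only [_root_.map_mul, Polynomial.aeval_C, map_pow, Polynomial.aeval_X]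
      exact (Algebra.commute_algebraMap_left r b).mul_left (h.pow_left _)

private lemma commute_cfc_of_commute {m : Type*} [Fintype m] [DecidableEq m]
    {A B : Matrix m m ℂ} (hA : IsSelfAdjoint A) (h : Commute A B) (f : ℝ → ℝ) :
    Commute (cfc f A) B := by
  have hfin : (spectrum ℝ A).Finite := Matrix.finite_real_spectrum
  set s : Finset ℝ := hfin.toFinset with hs
  have hcf : cfc f A = Polynomial.aeval A (Lagrange.interpolate s id f) := by
    rw [← cfc_polynomial (Lagrange.interpolate s id f) A hA]
    apply cfc_congr
    intro x hx
    exact (Lagrange.eval_interpolate_at_node f (Function.injective_id.injOn)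
      (hfin.mem_toFinset.mpr hx)).symm
  rw [hcf]
  exact commute_aeval h _

private lemma pbtV_apply_left {d N : ℕ} (π : Equiv.Perm (Fin N))
    (x y : (Fin N → Fin d) × Fin d) :
    pbtV d N π x y = if y = (x.1 ∘ ⇑π, x.2) then 1 else 0 := by
  unfold pbtV
  rw [ite_zero_mul_ite_zero]
  refine if_congr ?_ (one_mul 1) rfl
  constructor
  · rintro ⟨h1, h2⟩
    exact Prod.ext (funext fun j => (h1 j).symm) h2.symm
  · rintro rfl
    exact ⟨fun j => rfl, rfl⟩

private lemma pbtV_apply_right {d N : ℕ} (π : Equiv.Perm (Fin N))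
    (x y : (Fin N → Fin d) × Fin d) :
    pbtV d N π x y = if x = (y.1 ∘ ⇑π.symm, y.2) then 1 else 0 := by
  unfold pbtV
  rw [ite_zero_mul_ite_zero]
  refine if_congr ?_ (one_mul 1) rfl
  constructor
  · rintro ⟨h1, h2⟩
    refine Prod.ext (funext fun k => ?_) h2
    simpa using h1 (π.symm k)
  · rintro rfl
    exact ⟨fun j => by simp, rfl⟩

private lemma V_mul_rho {d N : ℕ} (π : Equiv.Perm (Fin N)) (i : Fin N) :
    pbtV d N π * pbtRho d N i = pbtRho d N (π i) * pbtV d N π := by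
  ext x z
  rw [Matrix.mul_apply, Matrix.mul_apply]
  have hL : ∑ y, pbtV d N π x y * pbtRho d N i y z = pbtRho d N i (x.1 ∘ ⇑π, x.2) z := by
    simp only [pbtV_apply_left π x, ite_mul, one_mul, zero_mul]
    rw [Finset.sum_ite_eq' Finset.univ ((x.1 ∘ ⇑π, x.2)) (fun y => pbtRho d N i y z)]
    simp
  have hR : ∑ y, pbtRho d N (π i) x y * pbtV d N π y z
      = pbtRho d N (π i) x (z.1 ∘ ⇑π.symm, z.2) := by
    simp only [fun y => pbtV_apply_right π y z, mul_ite, mul_one, mul_zero]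
    rw [Finset.sum_ite_eq' Finset.univ ((z.1 ∘ ⇑π.symm, z.2)) (fun y => pbtRho d N (π i) x y)]
    simp
  rw [hL, hR]
  unfold pbtRho
  simp only [Equiv.symm_apply_apply, Function.comp_apply]
  congr 2
  refine Finset.prod_bij' (fun j _ => π j) (fun j _ => π.symm j) ?_ ?_ ?_ ?_ ?_
  · intro a ha
    simp only [Finset.mem_erase, Finset.mem_univ, and_true] at ha ⊢
    exact fun h => ha (π.injective h)
  · intro a ha
    simp only [Finset.mem_erase, Finset.mem_univ, and_true] at ha ⊢
    exact fun h => ha (by rw [← h, Equiv.apply_symm_apply])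
  · intro a _; simp
  · intro a _; simp
  · intro a _; simp

private lemma unitary_row {d : ℕ} {U : Matrix (Fin d) (Fin d) ℂ}
    (hU : U ∈ Matrix.unitaryGroup (Fin d) ℂ) (a b : Fin d) :
    ∑ c, U a c * (starRingEnd ℂ) (U b c) = if a = b then 1 else 0 := by
  have h : U * star U = 1 := Matrix.mem_unitaryGroup_iff.mp hU
  calc ∑ c, U a c * (starRingEnd ℂ) (U b c) = (U * star U) a b := by
        rw [Matrix.mul_apply]
        exact Finset.sum_congr rfl fun c _ => by rw [Matrix.star_apply, starRingEnd_apply]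
    _ = if a = b then 1 else 0 := by rw [h, Matrix.one_apply]

private lemma unitary_col {d : ℕ} {U : Matrix (Fin d) (Fin d) ℂ}
    (hU : U ∈ Matrix.unitaryGroup (Fin d) ℂ) (a b : Fin d) :
    ∑ c, U c a * (starRingEnd ℂ) (U c b) = if a = b then 1 else 0 := by
  have h : star U * U = 1 := Matrix.mem_unitaryGroup_iff'.mp hU
  calc ∑ c, U c a * (starRingEnd ℂ) (U c b) = (star U * U) b a := by
        rw [Matrix.mul_apply]
        exact Finset.sum_congr rfl fun c _ => by
          rw [Matrix.star_apply, starRingEnd_apply, mul_comm]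
    _ = if a = b then 1 else 0 := by
        rw [h, Matrix.one_apply]
        exact if_congr eq_comm rfl rfl

private lemma T_mul_rho {d N : ℕ} {U : Matrix (Fin d) (Fin d) ℂ}
    (hU : U ∈ Matrix.unitaryGroup (Fin d) ℂ) (i : Fin N) :
    pbtT d N U * pbtRho d N i = pbtRho d N i * pbtT d N U := by
  ext x z
  rw [Matrix.mul_apply, Matrix.mul_apply]
  set c : ℂ := ((d : ℂ) ^ N)⁻¹ with hc
  set Iz : ℂ := if z.1 i = z.2 then 1 else 0 with hIz
  set Ix : ℂ := if x.1 i = x.2 then 1 else 0 with hIx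
  set W : ℂ := ∏ j ∈ Finset.univ.erase i, U (x.1 j) (z.1 j) with hW
  -- left side
  have hL : ∑ y, pbtT d N U x y * pbtRho d N i y z = c * Iz * (Ix * W) := by
    rw [Fintype.sum_prod_type]
    simp only [pbtT, pbtRho]
    have hinner : ∀ f : Fin N → Fin d,
        (∑ b, (∏ j, U (x.1 j) (f j)) * (starRingEnd ℂ) (U x.2 b) *
          (c * ((if f i = b then 1 else 0) * Iz *
            ∏ j ∈ Finset.univ.erase i, if f j = z.1 j then (1 : ℂ) else 0)))
        = (∏ j, U (x.1 j) (f j)) * (starRingEnd ℂ) (U x.2 (f i)) *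
          (c * (Iz * ∏ j ∈ Finset.univ.erase i, if f j = z.1 j then (1 : ℂ) else 0)) := by
      intro f
      rw [Finset.sum_congr rfl (fun b _ => show _ =
        if f i = b then (∏ j, U (x.1 j) (f j)) * (starRingEnd ℂ) (U x.2 b) *
          (c * (Iz * ∏ j ∈ Finset.univ.erase i, if f j = z.1 j then (1 : ℂ) else 0)) else 0
        from by split_ifs with h <;> ring)]
      rw [Finset.sum_ite_eq]
      simp
    rw [Finset.sum_congr rfl fun f _ => hinner f]
    set g : Fin N → Fin d → ℂ := fun j e =>
      if j = i then U (x.1 i) e * (starRingEnd ℂ) (U x.2 e)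
      else U (x.1 j) e * (if e = z.1 j then 1 else 0) with hg
    have hfact : ∀ f : Fin N → Fin d,
        (∏ j, U (x.1 j) (f j)) * (starRingEnd ℂ) (U x.2 (f i)) *
          (c * (Iz * ∏ j ∈ Finset.univ.erase i, if f j = z.1 j then (1 : ℂ) else 0))
        = (c * Iz) * ∏ j, g j (f j) := by
      intro f
      have h1 : ∏ j, g j (f j) = (U (x.1 i) (f i) * (starRingEnd ℂ) (U x.2 (f i))) *
          ∏ j ∈ Finset.univ.erase i,
            (U (x.1 j) (f j) * (if f j = z.1 j then (1 : ℂ) else 0)) := by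
        rw [← Finset.mul_prod_erase Finset.univ (fun j => g j (f j)) (Finset.mem_univ i)]
        congr 1
        · simp [hg]
        · exact Finset.prod_congr rfl fun j hj => by simp [hg, (Finset.mem_erase.mp hj).1]
      rw [h1, Finset.prod_mul_distrib,
        ← Finset.mul_prod_erase Finset.univ (fun j => U (x.1 j) (f j)) (Finset.mem_univ i)]
      ring
    rw [Finset.sum_congr rfl fun f _ => hfact f, ← Finset.mul_sum, ← Fintype.prod_sum]
    have h2 : ∏ j, (∑ e, g j e) = Ix * W := by
      rw [← Finset.mul_prod_erase Finset.univ (fun j => ∑ e, g j e) (Finset.mem_univ i)]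
      congr 1
      · simp only [hg, if_pos rfl]
        rw [unitary_row hU]
      · rw [hW]
        refine Finset.prod_congr rfl fun j hj => ?_
        have hji := (Finset.mem_erase.mp hj).1
        simp only [hg, if_neg hji, mul_ite, mul_one, mul_zero]
        rw [Finset.sum_ite_eq' Finset.univ (z.1 j) (fun e => U (x.1 j) e)]
        simp
    rw [h2]
  -- right side
  have hR : ∑ y, pbtRho d N i x y * pbtT d N U y z = c * Ix * (Iz * W) := by
    rw [Fintype.sum_prod_type]
    simp only [pbtT, pbtRho]
    have hinner : ∀ f : Fin N → Fin d,
        (∑ b, c * (Ix * (if f i = b then 1 else 0) *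
            ∏ j ∈ Finset.univ.erase i, if x.1 j = f j then (1 : ℂ) else 0) *
          ((∏ j, U (f j) (z.1 j)) * (starRingEnd ℂ) (U b z.2)))
        = c * (Ix * ∏ j ∈ Finset.univ.erase i, if x.1 j = f j then (1 : ℂ) else 0) *
          ((∏ j, U (f j) (z.1 j)) * (starRingEnd ℂ) (U (f i) z.2)) := by
      intro f
      rw [Finset.sum_congr rfl (fun b _ => show _ =
        if f i = b then c * (Ix * ∏ j ∈ Finset.univ.erase i, if x.1 j = f j then (1 : ℂ) else 0) *
          ((∏ j, U (f j) (z.1 j)) * (starRingEnd ℂ) (U b z.2)) else 0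
        from by split_ifs with h <;> ring)]
      rw [Finset.sum_ite_eq]
      simp
    rw [Finset.sum_congr rfl fun f _ => hinner f]
    set g : Fin N → Fin d → ℂ := fun j e =>
      if j = i then U e (z.1 i) * (starRingEnd ℂ) (U e z.2)
      else (if x.1 j = e then 1 else 0) * U e (z.1 j) with hg
    have hfact : ∀ f : Fin N → Fin d,
        c * (Ix * ∏ j ∈ Finset.univ.erase i, if x.1 j = f j then (1 : ℂ) else 0) *
          ((∏ j, U (f j) (z.1 j)) * (starRingEnd ℂ) (U (f i) z.2))
        = (c * Ix) * ∏ j, g j (f j) := by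
      intro f
      have h1 : ∏ j, g j (f j) = (U (f i) (z.1 i) * (starRingEnd ℂ) (U (f i) z.2)) *
          ∏ j ∈ Finset.univ.erase i,
            ((if x.1 j = f j then (1 : ℂ) else 0) * U (f j) (z.1 j)) := by
        rw [← Finset.mul_prod_erase Finset.univ (fun j => g j (f j)) (Finset.mem_univ i)]
        congr 1
        · simp [hg]
        · exact Finset.prod_congr rfl fun j hj => by simp [hg, (Finset.mem_erase.mp hj).1]
      rw [h1, Finset.prod_mul_distrib,
        ← Finset.mul_prod_erase Finset.univ (fun j => U (f j) (z.1 j)) (Finset.mem_univ i)]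
      ring
    rw [Finset.sum_congr rfl fun f _ => hfact f, ← Finset.mul_sum, ← Fintype.prod_sum]
    have h2 : ∏ j, (∑ e, g j e) = Iz * W := by
      rw [← Finset.mul_prod_erase Finset.univ (fun j => ∑ e, g j e) (Finset.mem_univ i)]
      congr 1
      · simp only [hg, if_pos rfl]
        rw [unitary_col hU]
      · rw [hW]
        refine Finset.prod_congr rfl fun j hj => ?_
        have hji := (Finset.mem_erase.mp hj).1
        simp only [hg, if_neg hji, boole_mul]
        rw [Finset.sum_ite_eq Finset.univ (x.1 j) (fun e => U e (z.1 j))]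
        simp
    rw [h2]
  rw [hL, hR]
  ring

private lemma rho_selfAdjoint {d N : ℕ} (i : Fin N) : IsSelfAdjoint (pbtRho d N i) := by
  show star _ = _
  ext x y
  rw [Matrix.star_apply]
  unfold pbtRho
  simp only [star_mul', star_prod, apply_ite (star : ℂ → ℂ), star_one, star_zero,
    star_inv₀, star_pow, star_natCast]
  rw [mul_comm (if y.1 i = y.2 then (1:ℂ) else 0)]
  congr 1
  congr 1
  exact Finset.prod_congr rfl fun j _ => if_congr eq_comm rfl rfl

/-- Symmetries of the dual operator `X = ∑ᵢ ρᵢ ρ̄^(-1/2) ρᵢ ρ̄^(-1/2)`: it commutes with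
`V(π)` for every permutation `π` and with `T(U)` for every unitary `U`. -/
theorem pbt_dual_operator_symmetries (d N : ℕ) (hd : 1 ≤ d) (hN : 1 ≤ N)
    (X : Matrix ((Fin N → Fin d) × Fin d) ((Fin N → Fin d) × Fin d) ℂ)
    (hX : X = ∑ i, pbtRho d N i * pinvSqrt (∑ j, pbtRho d N j) * pbtRho d N i *
      pinvSqrt (∑ j, pbtRho d N j)) :
    (∀ π : Equiv.Perm (Fin N), pbtV d N π * X = X * pbtV d N π) ∧
    (∀ U : Matrix (Fin d) (Fin d) ℂ, U ∈ Matrix.unitaryGroup (Fin d) ℂ →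
      pbtT d N U * X = X * pbtT d N U) := by
  subst hX
  set S : Matrix ((Fin N → Fin d) × Fin d) ((Fin N → Fin d) × Fin d) ℂ :=
    ∑ j, pbtRho d N j with hS
  set P : Matrix ((Fin N → Fin d) × Fin d) ((Fin N → Fin d) × Fin d) ℂ := pinvSqrt S with hP
  have hSsa : IsSelfAdjoint S := by
    rw [hS]
    show star _ = _
    rw [star_sum]
    exact Finset.sum_congr rfl fun i _ => rho_selfAdjoint i
  constructor
  · intro π
    have hVS : Commute S (pbtV d N π) := by
      show S * _ = _ * S
      rw [hS, Finset.mul_sum, Finset.sum_mul]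
      refine Eq.symm ?_
      calc ∑ i, pbtV d N π * pbtRho d N i
          = ∑ i, pbtRho d N (π i) * pbtV d N π :=
            Finset.sum_congr rfl fun i _ => V_mul_rho π i
        _ = ∑ i, pbtRho d N i * pbtV d N π :=
            Equiv.sum_comp π (fun i => pbtRho d N i * pbtV d N π)
    have hVP : pbtV d N π * P = P * pbtV d N π := by
      have h := commute_cfc_of_commute hSsa hVS
        (fun x : ℝ => if 0 < x then (Real.sqrt x)⁻¹ else 0)
      simpa [pinvSqrt, hP] using h.symm.eq
    have key : ∀ i, pbtV d N π * (pbtRho d N i * P * pbtRho d N i * P)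
        = (pbtRho d N (π i) * P * pbtRho d N (π i) * P) * pbtV d N π := by
      intro i
      have h1 := V_mul_rho (d := d) π i
      simp only [← mul_assoc]
      rw [h1, mul_assoc (pbtRho d N (π i)) (pbtV d N π) P, hVP, ← mul_assoc,
        mul_assoc (pbtRho d N (π i) * P) (pbtV d N π) (pbtRho d N i), h1, ← mul_assoc,
        mul_assoc (pbtRho d N (π i) * P * pbtRho d N (π i)) (pbtV d N π) P, hVP, ← mul_assoc]
    rw [Finset.mul_sum, Finset.sum_mul]
    exact (Finset.sum_congr rfl fun i _ => key i).trans
      (Equiv.sum_comp π (fun i => (pbtRho d N i * P * pbtRho d N i * P) * pbtV d N π))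
  · intro U hU
    have hTρ : ∀ i, Commute (pbtT d N U) (pbtRho d N i) := fun i => T_mul_rho hU i
    have hTS : Commute S (pbtT d N U) := by
      show S * _ = _ * S
      rw [hS, Finset.mul_sum, Finset.sum_mul]
      exact Finset.sum_congr rfl fun i _ => (hTρ i).symm
    have hTP : Commute (pbtT d N U) P := by
      have h := commute_cfc_of_commute hSsa hTS
        (fun x : ℝ => if 0 < x then (Real.sqrt x)⁻¹ else 0)
      simpa [pinvSqrt, hP] using h.symm
    rw [Finset.mul_sum, Finset.sum_mul]
    refine Finset.sum_congr rfl fun i _ => ?_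
    exact (((hTρ i).mul_right hTP).mul_right (hTρ i)).mul_right hTP
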